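/- arXiv:2012.15736 — 2 statements merged into one kernel-verified Lean document; each statement's English description precedes it below -/
import Mathlib

section
/- Let K/k be a separable algebraic field extension and let A be a reduced commutative k-algebra. Then the tensor product K ⊗_k A is a reduced ring. -/
open scoped TensorProduct

open Polynomial

set_option maxHeartbeats 1000000
set_option synthInstance.maxHeartbeats 400000

/-- If `L/k` is a finite separable field extension and `F/k` is any field extension,
then `F ⊗[k] L` is reduced. -/
theorem aux_tensor_fin_reduced (k F L : Type*) [Field k] [Field F] [Algebra k F]
    [Field L] [Algebra k L] [FiniteDimensional k L] [Algebra.IsSeparable k L] :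
    IsReduced (F ⊗[k] L) := by
  classical
  set pb := Field.powerBasisOfFiniteOfSeparable k L with hpb
  set p := minpoly k pb.gen with hp
  set q := p.map (algebraMap k F) with hqdef
  have hpm : p.Monic := minpoly.monic (Algebra.IsSeparable.isIntegral k pb.gen)
  have hq0 : q ≠ 0 := (hpm.map (algebraMap k F)).ne_zero
  have hsep : p.Separable := Algebra.IsSeparable.isSeparable k pb.gen
  have hqsf : Squarefree q := (hsep.map).squarefree
  -- `AdjoinRoot q` is reduced
  have hred : IsReduced (AdjoinRoot q) := by
    have : (Ideal.span {q}).IsRadical := isRadical_iff_span_singleton.mp hqsf.isRadical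
    exact (Ideal.isRadical_iff_quotient_reduced _).mp this
  -- the element `1 ⊗ gen` is a root of `q`
  set x : F ⊗[k] L := Algebra.TensorProduct.includeRight pb.gen with hx
  have hroot : aeval x q = 0 := by
    rw [hqdef, aeval_map_algebraMap, hx, Polynomial.aeval_algHom_apply, minpoly.aeval, map_zero]
  set g : AdjoinRoot q →ₐ[F] F ⊗[k] L := AdjoinRoot.liftAlgHom q (Algebra.ofId F _) x
    (by rw [← hroot, aeval_def]; rfl) with hg
  have hgpow : ∀ n : ℕ, g (AdjoinRoot.root q ^ n) = (1 : F) ⊗ₜ[k] (pb.gen ^ n) := by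
    intro n
    rw [map_pow, hg, AdjoinRoot.liftAlgHom_root, hx]
    show (Algebra.TensorProduct.includeRight pb.gen) ^ n = _
    rw [← map_pow]
    rfl
  have hsurj : Function.Surjective g := by
    intro z
    have hz : z ∈ Submodule.span F (Set.range (pb.basis.baseChange F)) := by
      rw [(pb.basis.baseChange F).span_eq]; trivial
    have hle : Submodule.span F (Set.range (pb.basis.baseChange F)) ≤
        Subalgebra.toSubmodule g.range := by
      rw [Submodule.span_le]
      rintro _ ⟨i, rfl⟩
      refine ⟨AdjoinRoot.root q ^ (i : ℕ), ?_⟩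
      show g (AdjoinRoot.root q ^ (i : ℕ)) = _
      rw [hgpow, Module.Basis.baseChange_apply, PowerBasis.coe_basis]
    exact hle hz
  haveI : FiniteDimensional F (AdjoinRoot q) :=
    Module.Finite.of_basis (AdjoinRoot.powerBasis hq0).basis
  haveI : FiniteDimensional F (F ⊗[k] L) :=
    Module.Finite.of_basis (pb.basis.baseChange F)
  have hdim : Module.finrank F (AdjoinRoot q) = Module.finrank F (F ⊗[k] L) := by
    rw [(AdjoinRoot.powerBasis hq0).finrank, Module.finrank_baseChange, pb.finrank]
    show q.natDegree = pb.dim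
    rw [hqdef, Polynomial.natDegree_map, pb.natDegree_minpoly]
  have hinj : Function.Injective g :=
    (LinearMap.injective_iff_surjective_of_finrank_eq_finrank hdim (f := g.toLinearMap)).mpr hsurj
  let e : AdjoinRoot q ≃ₐ[F] F ⊗[k] L := AlgEquiv.ofBijective g ⟨hinj, hsurj⟩
  exact isReduced_of_injective e.symm.toRingEquiv.toRingHom e.symm.injective

/-- If `K/k` is a separable algebraic extension and `F/k` any field extension,
then `K ⊗[k] F` is reduced. -/
theorem aux_tensor_field_reduced (k K F : Type*) [Field k] [Field K] [Algebra k K]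
    [Algebra.IsSeparable k K] [Field F] [Algebra k F] :
    IsReduced (K ⊗[k] F) := by
  classical
  constructor
  intro x hx
  obtain ⟨s, rfl⟩ := TensorProduct.exists_finset x
  set S : Set K := Prod.fst '' (s : Set (K × F)) with hS
  haveI : Finite S := (s.finite_toSet.image _).to_subtype
  set L : IntermediateField k K := IntermediateField.adjoin k S with hL
  haveI : FiniteDimensional k L :=
    IntermediateField.finiteDimensional_adjoin fun x _ => Algebra.IsSeparable.isIntegral k x
  haveI : Algebra.IsSeparable k L := Algebra.isSeparable_tower_bot_of_isSeparable k L K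
  haveI : IsReduced (L ⊗[k] F) := by
    haveI := aux_tensor_fin_reduced k F L
    exact isReduced_of_injective
      ((Algebra.TensorProduct.comm k (L : Type _) F : L ⊗[k] F ≃ₐ[k] F ⊗[k] L) :
        L ⊗[k] F →+* F ⊗[k] L)
      (Algebra.TensorProduct.comm k (L : Type _) F).injective
  set j : L ⊗[k] F →ₐ[k] K ⊗[k] F :=
    Algebra.TensorProduct.map (L.val) (AlgHom.id k F) with hj
  have hjinj : Function.Injective j := by
    have h1 : j.toLinearMap = LinearMap.rTensor F (L.val.toLinearMap) := by
      apply TensorProduct.ext'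
      intro a b
      rfl
    have h2 : Function.Injective (LinearMap.rTensor F (L.val.toLinearMap)) :=
      Module.Flat.rTensor_preserves_injective_linearMap _ (L.val.injective)
    show Function.Injective j.toLinearMap
    rw [h1]; exact h2
  have hmem : ∀ i ∈ s, i.1 ∈ L := fun i hi =>
    IntermediateField.subset_adjoin k S ⟨i, hi, rfl⟩
  set y : L ⊗[k] F := ∑ i ∈ s.attach, (⟨i.1.1, hmem i.1 i.2⟩ : L) ⊗ₜ[k] i.1.2 with hy
  have hjy : j y = ∑ i ∈ s, i.1 ⊗ₜ[k] i.2 := by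
    rw [hy, map_sum, ← Finset.sum_attach s (fun i => i.1 ⊗ₜ[k] i.2)]
    rfl
  have hynil : IsNilpotent y := by
    obtain ⟨n, hn⟩ := hx
    refine ⟨n, hjinj ?_⟩
    have h1 : j (y ^ n) = (j y) ^ n := map_pow j.toRingHom y n
    rw [h1, hjy, hn]
    exact j.toRingHom.map_zero.symm
  rw [← hjy, IsNilpotent.eq_zero hynil, map_zero]

/-- If `K/k` is a separable (algebraic) field extension and `A` is a reduced commutative
`k`-algebra, then `K ⊗[k] A` is a reduced ring. -/
theorem tensorProduct_isReduced_of_separable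
    (k K A : Type*) [Field k] [Field K] [Algebra k K] [Algebra.IsSeparable k K]
    [CommRing A] [Algebra k A] [IsReduced A] :
    IsReduced (K ⊗[k] A) := by
  classical
  constructor
  intro x hx
  set b := Module.Basis.ofVectorSpace k K with hb
  set E : K ⊗[k] A ≃ₗ[k] ((Module.Basis.ofVectorSpaceIndex k K) →₀ A) :=
    (TensorProduct.congr b.repr (LinearEquiv.refl k A)).trans
      (TensorProduct.finsuppScalarLeft k A _) with hE
  suffices h : E x = 0 by
    have := congrArg E.symm h
    rwa [LinearEquiv.symm_apply_apply, map_zero] at this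
  ext i
  suffices hmem : E x i ∈ nilradical A by
    rw [nilradical_eq_zero A] at hmem
    simpa using hmem
  rw [nilradical_eq_sInf]
  rw [Ideal.mem_sInf]
  rintro p (hp : p.IsPrime)
  haveI := hp
  set F := FractionRing (A ⧸ p) with hF
  set φ : A →ₐ[k] F :=
    (IsScalarTower.toAlgHom k (A ⧸ p) F).comp (Ideal.Quotient.mkₐ k p) with hφ
  set Φ : K ⊗[k] A →ₐ[k] K ⊗[k] F :=
    Algebra.TensorProduct.map (AlgHom.id k K) φ with hΦ
  haveI : IsReduced (K ⊗[k] F) := aux_tensor_field_reduced k K F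
  have h0 : Φ x = 0 := IsNilpotent.eq_zero (hx.map Φ.toRingHom)
  set E' : K ⊗[k] F ≃ₗ[k] ((Module.Basis.ofVectorSpaceIndex k K) →₀ F) :=
    (TensorProduct.congr b.repr (LinearEquiv.refl k F)).trans
      (TensorProduct.finsuppScalarLeft k F _) with hE'
  have hnat : ∀ z : K ⊗[k] A, E' (Φ z) i = φ (E z i) := by
    intro z
    induction z using TensorProduct.induction_on with
    | zero => simp
    | tmul y a =>
        rw [hΦ, Algebra.TensorProduct.map_tmul, AlgHom.coe_id, id_eq]
        rw [hE, hE']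
        simp only [LinearEquiv.trans_apply, TensorProduct.congr_tmul, LinearEquiv.refl_apply,
          TensorProduct.finsuppScalarLeft_apply_tmul_apply]
        rw [map_smul]
    | add u v hu hv =>
        simp only [map_add, Finsupp.add_apply, hu, hv]
  have : φ (E x i) = 0 := by
    rw [← hnat, h0, map_zero]
    simp
  have hmk : Ideal.Quotient.mk p (E x i) = 0 := by
    apply IsFractionRing.injective (A ⧸ p) F
    rw [map_zero]
    exact this
  exact Ideal.Quotient.eq_zero_iff_mem.mp hmk
end

section
/- Let G be a group, G' a subgroup of finite index, and A' a G'-module. Then the induced G-module Ind_{G'}^G A' = ℤ[G] ⊗_{ℤ[G']} A' is isomorphic, as a G-module, to the coinduced G-module Hom_{ℤ[G']}(ℤ[G], A'). -/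
open scoped TensorProduct

variable (G : Type*) [Group G] (H : Subgroup G)
  (A : Type*) [AddCommGroup A] [DistribMulAction H A]

/-- The set of balancing relations defining `ℤ[G] ⊗_{ℤ[H]} A` as a quotient of
`ℤ[G] ⊗_ℤ A`: the elements `(x·h) ⊗ a - x ⊗ (h·a)`. -/
def IndRelSet : Set (MonoidAlgebra ℤ G ⊗[ℤ] A) :=
  {z | ∃ (x : MonoidAlgebra ℤ G) (h : H) (a : A),
    z = (x * MonoidAlgebra.single (h : G) 1) ⊗ₜ[ℤ] a - x ⊗ₜ[ℤ] (h • a)}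

/-- The subgroup generated by the balancing relations. -/
noncomputable def IndSub : AddSubgroup (MonoidAlgebra ℤ G ⊗[ℤ] A) :=
  AddSubgroup.closure (IndRelSet G H A)

/-- The induced `G`-module `Ind_H^G A = ℤ[G] ⊗_{ℤ[H]} A`, realized as the quotient of
`ℤ[G] ⊗_ℤ A` by the balancing relations. -/
noncomputable def Ind := (MonoidAlgebra ℤ G ⊗[ℤ] A) ⧸ IndSub G H A

noncomputable instance : AddCommGroup (Ind G H A) :=
  QuotientAddGroup.Quotient.addCommGroup _

/-- The action of `g : G` on `Ind_H^G A`, given by `σ(r ⊗ a) = (σ r) ⊗ a`. -/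
noncomputable def indSmul (g : G) : Ind G H A →+ Ind G H A :=
  QuotientAddGroup.map (IndSub G H A) (IndSub G H A)
    (TensorProduct.map (LinearMap.mulLeft ℤ (MonoidAlgebra.single g 1))
      LinearMap.id).toAddMonoidHom
    (by
      refine (AddSubgroup.closure_le _).mpr ?_
      rintro z ⟨x, h, a, rfl⟩
      simp only [SetLike.mem_coe, AddSubgroup.mem_comap]
      have : (TensorProduct.map (LinearMap.mulLeft ℤ (MonoidAlgebra.single g 1))
            LinearMap.id).toAddMonoidHom
            ((x * MonoidAlgebra.single (h : G) 1) ⊗ₜ[ℤ] a - x ⊗ₜ[ℤ] (h • a)) =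
          ((MonoidAlgebra.single g 1 * x) * MonoidAlgebra.single (h : G) 1) ⊗ₜ[ℤ] a -
            (MonoidAlgebra.single g 1 * x) ⊗ₜ[ℤ] (h • a) := by
        simp [map_sub, mul_assoc]
      rw [this]
      exact AddSubgroup.subset_closure ⟨MonoidAlgebra.single g 1 * x, h, a, rfl⟩)

/-- The coinduced `G`-module `Hom_{ℤ[H]}(ℤ[G], A)`: additive maps `ℤ[G] → A` that are
`H`-equivariant for the left `H`-action on `ℤ[G]` by left multiplication. -/
def Coind : AddSubgroup (MonoidAlgebra ℤ G →+ A) where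
  carrier := {φ | ∀ (h : H) (x : MonoidAlgebra ℤ G),
    φ (MonoidAlgebra.single (h : G) 1 * x) = h • φ x}
  add_mem' := by
    intro φ ψ hφ hψ h x
    simp [hφ h x, hψ h x, smul_add]
  zero_mem' := by intro h x; simp
  neg_mem' := by
    intro φ hφ h x
    simp [hφ h x]

/-- The action of `g : G` on the coinduced module, given by `(σ φ)(x) = φ(x σ)`. -/
noncomputable def coindSmul (g : G) (φ : Coind G H A) : Coind G H A :=
  ⟨(φ : MonoidAlgebra ℤ G →+ A).comp (AddMonoidHom.mulRight (MonoidAlgebra.single g 1)),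
    by
      intro h x
      simp only [AddMonoidHom.comp_apply, AddMonoidHom.mulRight_apply, mul_assoc]
      exact φ.2 h _⟩



open scoped Classical

section Aux

variable (G : Type*) [Group G] (H : Subgroup G)
  (A : Type*) [AddCommGroup A] [DistribMulAction H A]

/-- Projection `ℤ[G] → A` extracting the `H`-part and acting on `a`. -/
noncomputable def prAux (a : A) : MonoidAlgebra ℤ G →ₗ[ℤ] A :=
  Finsupp.lsum ℤ (fun g =>
    if hg : g ∈ H then LinearMap.toSpanSingleton ℤ A ((⟨g, hg⟩ : H) • a) else 0) ∘ₗ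
    (MonoidAlgebra.coeffLinearEquiv ℤ).toLinearMap

variable {G H A}

theorem hsmul_zsmul (h : H) (c : ℤ) (a : A) : h • (c • a) = c • (h • a) :=
  map_zsmul (DistribMulAction.toAddMonoidHom A h) c a

theorem prAux_single (a : A) (g : G) (c : ℤ) :
    prAux G H A a (MonoidAlgebra.single g c) =
      if hg : g ∈ H then c • ((⟨g, hg⟩ : H) • a) else 0 := by
  rw [prAux, LinearMap.comp_apply]
  erw [Finsupp.lsum_single]
  split_ifs with hg
  · rfl
  · rfl

theorem prAux_single_mem (a : A) {g : G} (hg : g ∈ H) (c : ℤ) :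
    prAux G H A a (MonoidAlgebra.single g c) = c • ((⟨g, hg⟩ : H) • a) := by
  rw [prAux_single, dif_pos hg]

theorem prAux_single_not_mem (a : A) {g : G} (hg : g ∉ H) (c : ℤ) :
    prAux G H A a (MonoidAlgebra.single g c) = 0 := by
  rw [prAux_single, dif_neg hg]

theorem prAux_add (a b : A) (z : MonoidAlgebra ℤ G) :
    prAux G H A (a + b) z = prAux G H A a z + prAux G H A b z := by
  induction z using MonoidAlgebra.induction_linear with
  | zero => simp
  | add f g hf hg => rw [map_add, map_add, map_add, hf, hg]; abel
  | single g c =>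
    by_cases hg : g ∈ H
    · rw [prAux_single_mem _ hg, prAux_single_mem _ hg, prAux_single_mem _ hg,
        smul_add, smul_add]
    · simp [prAux_single_not_mem _ hg]

theorem prAux_zsmul (c : ℤ) (a : A) (z : MonoidAlgebra ℤ G) :
    prAux G H A (c • a) z = c • prAux G H A a z := by
  induction z using MonoidAlgebra.induction_linear with
  | zero => simp
  | add f g hf hg => rw [map_add, map_add, hf, hg, smul_add]
  | single g c' =>
    by_cases hg : g ∈ H
    · rw [prAux_single_mem _ hg, prAux_single_mem _ hg,
        hsmul_zsmul, smul_comm c' c]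
    · simp [prAux_single_not_mem _ hg]

/-- Balancing: `pr a (z * h) = pr (h • a) z`. -/
theorem prAux_mul_single (a : A) (h : H) (z : MonoidAlgebra ℤ G) :
    prAux G H A a (z * MonoidAlgebra.single (h : G) 1) = prAux G H A (h • a) z := by
  induction z using MonoidAlgebra.induction_linear with
  | zero => simp
  | add f g hf hg => rw [add_mul, map_add, map_add, hf, hg]
  | single g c =>
    rw [MonoidAlgebra.single_mul_single, mul_one]
    by_cases hg : g ∈ H
    · rw [prAux_single_mem _ (mul_mem hg h.2), prAux_single_mem _ hg]
      congr 1
      have : (⟨g * (h : G), mul_mem hg h.2⟩ : H) = ⟨g, hg⟩ * h := rfl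
      rw [this, mul_smul]
    · rw [prAux_single_not_mem _ hg]
      exact prAux_single_not_mem _ (fun hc => hg (by simpa using mul_mem hc (inv_mem h.2))) c

/-- Equivariance: `pr a (h * z) = h • pr a z`. -/
theorem prAux_single_mul (a : A) (h : H) (z : MonoidAlgebra ℤ G) :
    prAux G H A a (MonoidAlgebra.single (h : G) 1 * z) = h • prAux G H A a z := by
  induction z using MonoidAlgebra.induction_linear with
  | zero => simp
  | add f g hf hg => rw [mul_add, map_add, map_add, hf, hg, smul_add]
  | single g c =>
    rw [MonoidAlgebra.single_mul_single, one_mul]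
    by_cases hg : g ∈ H
    · rw [prAux_single_mem _ (mul_mem h.2 hg), prAux_single_mem _ hg]
      have : (⟨(h : G) * g, mul_mem h.2 hg⟩ : H) = h * ⟨g, hg⟩ := rfl
      rw [this, mul_smul, hsmul_zsmul]
    · rw [prAux_single_not_mem _ hg, smul_zero]
      exact prAux_single_not_mem _ (fun hc => hg (by simpa using mul_mem (inv_mem h.2) hc)) c

variable (G H A) in
/-- The bilinear map `(x, a) ↦ (y ↦ pr_a (y * x))`. -/
noncomputable def coBil : MonoidAlgebra ℤ G →ₗ[ℤ] A →ₗ[ℤ] (MonoidAlgebra ℤ G →+ A) :=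
  LinearMap.mk₂ ℤ
    (fun x a => (prAux G H A a).toAddMonoidHom.comp (AddMonoidHom.mulRight x))
    (fun x x' a => by
      ext y
      simp [mul_add])
    (fun c x a => by
      refine AddMonoidHom.ext fun y => ?_
      show prAux G H A a (y * (c • x)) = c • prAux G H A a (y * x)
      rw [mul_smul_comm, map_smul])
    (fun x a a' => by
      ext y
      simp [prAux_add])
    (fun c x a => by
      refine AddMonoidHom.ext fun y => ?_
      exact prAux_zsmul c a (y * x))

variable (G H A) in
noncomputable def coFtensor : MonoidAlgebra ℤ G ⊗[ℤ] A →ₗ[ℤ] (MonoidAlgebra ℤ G →+ A) :=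
  TensorProduct.lift (coBil G H A)

theorem coFtensor_tmul (x : MonoidAlgebra ℤ G) (a : A) (y : MonoidAlgebra ℤ G) :
    coFtensor G H A (x ⊗ₜ[ℤ] a) y = prAux G H A a (y * x) := rfl

theorem coFtensor_mem (z : MonoidAlgebra ℤ G ⊗[ℤ] A) :
    coFtensor G H A z ∈ Coind G H A := by
  induction z using TensorProduct.induction_on with
  | zero => rw [map_zero]; exact (Coind G H A).zero_mem
  | add x y hx hy => rw [map_add]; exact (Coind G H A).add_mem hx hy
  | tmul x a =>
    intro h y
    rw [coFtensor_tmul, coFtensor_tmul, mul_assoc, prAux_single_mul]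

variable (G H A) in
/-- The forward map `Ind → Coind`. -/
noncomputable def EAux : Ind G H A →+ Coind G H A :=
  QuotientAddGroup.lift (IndSub G H A)
    (AddMonoidHom.codRestrict (coFtensor G H A).toAddMonoidHom (Coind G H A)
      coFtensor_mem)
    (by
      refine (AddSubgroup.closure_le _).mpr ?_
      rintro z ⟨x, h, a, rfl⟩
      rw [SetLike.mem_coe, AddMonoidHom.mem_ker]
      refine Subtype.ext (AddMonoidHom.ext fun y => ?_)
      show coFtensor G H A ((x * MonoidAlgebra.single (h : G) 1) ⊗ₜ[ℤ] a
          - x ⊗ₜ[ℤ] (h • a)) y = 0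
      rw [map_sub]
      show coFtensor G H A ((x * MonoidAlgebra.single (h : G) 1) ⊗ₜ[ℤ] a) y
          - coFtensor G H A (x ⊗ₜ[ℤ] (h • a)) y = 0
      rw [coFtensor_tmul, coFtensor_tmul, ← mul_assoc, prAux_mul_single, sub_self])

theorem EAux_mk_apply (x : MonoidAlgebra ℤ G) (a : A) (y : MonoidAlgebra ℤ G) :
    (EAux G H A (QuotientAddGroup.mk (x ⊗ₜ[ℤ] a)) : MonoidAlgebra ℤ G →+ A) y
      = prAux G H A a (y * x) := rfl

/-- The balancing relation holds in the quotient. -/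
theorem ind_mk_rel (x : MonoidAlgebra ℤ G) (h : H) (b : A) :
    (QuotientAddGroup.mk ((x * MonoidAlgebra.single (h : G) 1) ⊗ₜ[ℤ] b) : Ind G H A)
      = QuotientAddGroup.mk (x ⊗ₜ[ℤ] (h • b)) := by
  rw [QuotientAddGroup.eq]
  have hmem : (x * MonoidAlgebra.single (h : G) 1) ⊗ₜ[ℤ] b - x ⊗ₜ[ℤ] (h • b)
      ∈ IndSub G H A := AddSubgroup.subset_closure ⟨x, h, b, rfl⟩
  have : -((x * MonoidAlgebra.single (h : G) 1) ⊗ₜ[ℤ] b) + x ⊗ₜ[ℤ] (h • b)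
      = -((x * MonoidAlgebra.single (h : G) 1) ⊗ₜ[ℤ] b - x ⊗ₜ[ℤ] (h • b)) := by
    abel
  rw [this]
  exact AddSubgroup.neg_mem _ hmem

/-- Elements of `Coind` are determined by their values at coset representatives. -/
theorem coind_ext {φ ψ : Coind G H A}
    (hrep : ∀ c : G ⧸ H,
      (φ : MonoidAlgebra ℤ G →+ A) (MonoidAlgebra.single (Quotient.out c)⁻¹ 1)
        = (ψ : MonoidAlgebra ℤ G →+ A) (MonoidAlgebra.single (Quotient.out c)⁻¹ 1)) :
    φ = ψ := by
  refine Subtype.ext (MonoidAlgebra.addMonoidHom_ext fun g c => ?_)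
  show (φ : MonoidAlgebra ℤ G →+ A) (MonoidAlgebra.single g c)
    = (ψ : MonoidAlgebra ℤ G →+ A) (MonoidAlgebra.single g c)
  have hsingle : (MonoidAlgebra.single g c : MonoidAlgebra ℤ G)
      = c • MonoidAlgebra.single g 1 := by
    rw [MonoidAlgebra.smul_single, smul_eq_mul, mul_one]
  rw [hsingle, map_zsmul, map_zsmul]
  congr 1
  set q : G ⧸ H := QuotientGroup.mk g⁻¹ with hq
  have hout : (QuotientGroup.mk (Quotient.out q) : G ⧸ H) = QuotientGroup.mk g⁻¹ := by
    rw [QuotientGroup.out_eq']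
  have hmem : g * Quotient.out q ∈ H := by
    have := QuotientGroup.eq.mp hout
    simpa using inv_mem this
  set h : H := ⟨g * Quotient.out q, hmem⟩ with hh
  have hdecomp : (MonoidAlgebra.single g 1 : MonoidAlgebra ℤ G)
      = MonoidAlgebra.single (h : G) 1 * MonoidAlgebra.single (Quotient.out q)⁻¹ 1 := by
    rw [MonoidAlgebra.single_mul_single, mul_one]
    congr 1
    simp [hh, mul_assoc]
  rw [hdecomp, φ.2 h, ψ.2 h, hrep q]

end Aux

section Inverse

variable {G : Type*} [Group G] {H : Subgroup G}
  {A : Type*} [AddCommGroup A] [DistribMulAction H A]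

variable (G H A) in
/-- The inverse map `Coind → Ind`, defined using coset representatives. -/
noncomputable def GinvAux [Fintype (G ⧸ H)] : Coind G H A →+ Ind G H A where
  toFun φ := ∑ c : G ⧸ H, QuotientAddGroup.mk
    ((MonoidAlgebra.single (Quotient.out c) 1 : MonoidAlgebra ℤ G) ⊗ₜ[ℤ]
      ((φ : MonoidAlgebra ℤ G →+ A) (MonoidAlgebra.single (Quotient.out c)⁻¹ 1)))
  map_zero' := by simp; exact Finset.sum_const_zero
  map_add' φ ψ := by
    erw [← Finset.sum_add_distrib]
    refine Finset.sum_congr rfl fun c _ => ?_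
    have : ((φ + ψ : Coind G H A) : MonoidAlgebra ℤ G →+ A)
        = (φ : MonoidAlgebra ℤ G →+ A) + (ψ : MonoidAlgebra ℤ G →+ A) := rfl
    rw [this, AddMonoidHom.add_apply, TensorProduct.tmul_add]
    rfl

theorem GinvAux_apply [Fintype (G ⧸ H)] (φ : Coind G H A) :
    GinvAux G H A φ = ∑ c : G ⧸ H, QuotientAddGroup.mk
      ((MonoidAlgebra.single (Quotient.out c) 1 : MonoidAlgebra ℤ G) ⊗ₜ[ℤ]
        ((φ : MonoidAlgebra ℤ G →+ A) (MonoidAlgebra.single (Quotient.out c)⁻¹ 1))) := rfl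

theorem EAux_GinvAux [Fintype (G ⧸ H)] (φ : Coind G H A) :
    EAux G H A (GinvAux G H A φ) = φ := by
  refine coind_ext fun c' => ?_
  show (EAux G H A (∑ c : G ⧸ H, QuotientAddGroup.mk
      ((MonoidAlgebra.single (Quotient.out c) 1 : MonoidAlgebra ℤ G) ⊗ₜ[ℤ]
        ((φ : MonoidAlgebra ℤ G →+ A) (MonoidAlgebra.single (Quotient.out c)⁻¹ 1)))) :
        MonoidAlgebra ℤ G →+ A) (MonoidAlgebra.single (Quotient.out c')⁻¹ 1) = _
  erw [map_sum, AddSubgroup.val_finset_sum, AddMonoidHom.finset_sum_apply]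
  rw [Finset.sum_eq_single_of_mem c' (Finset.mem_univ c')]
  · show prAux G H A _ (MonoidAlgebra.single (Quotient.out c')⁻¹ 1
        * MonoidAlgebra.single (Quotient.out c') 1) = _
    rw [MonoidAlgebra.single_mul_single, mul_one, inv_mul_cancel]
    rw [prAux_single_mem _ (one_mem H), one_smul]
    have : (⟨(1 : G), one_mem H⟩ : H) = 1 := rfl
    rw [this, one_smul]
  · intro c _ hc
    show prAux G H A _ (MonoidAlgebra.single (Quotient.out c')⁻¹ 1
        * MonoidAlgebra.single (Quotient.out c) 1) = 0
    rw [MonoidAlgebra.single_mul_single, mul_one]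
    refine prAux_single_not_mem _ (fun hmem => hc ?_) 1
    have : (QuotientGroup.mk (Quotient.out c') : G ⧸ H) = QuotientGroup.mk (Quotient.out c) :=
      QuotientGroup.eq.mpr hmem
    rw [QuotientGroup.out_eq', QuotientGroup.out_eq'] at this
    exact this.symm

theorem GinvAux_EAux [Fintype (G ⧸ H)] (v : Ind G H A) :
    GinvAux G H A (EAux G H A v) = v := by
  induction v using QuotientAddGroup.induction_on with
  | H z =>
    induction z using TensorProduct.induction_on with
    | zero => rw [QuotientAddGroup.mk_zero]; erw [map_zero]; rfl
    | add x y hx hy =>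
      rw [QuotientAddGroup.mk_add]; erw [map_add, map_add, hx, hy]; rfl
    | tmul x a =>
      induction x using MonoidAlgebra.induction_linear with
      | zero =>
        rw [show ((0 : MonoidAlgebra ℤ G) ⊗ₜ[ℤ] a) = 0 from TensorProduct.zero_tmul _ a]
        rw [QuotientAddGroup.mk_zero]; erw [map_zero]; rfl
      | add f g hf hg =>
        rw [TensorProduct.add_tmul, QuotientAddGroup.mk_add]; erw [map_add, map_add, hf, hg]; rfl
      | single g c =>
        rw [GinvAux_apply]
        rw [Finset.sum_eq_single_of_mem (QuotientGroup.mk g) (Finset.mem_univ _)]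
        · set q : G ⧸ H := QuotientGroup.mk g with hq
          have hmem : (Quotient.out q)⁻¹ * g ∈ H := by
            refine QuotientGroup.eq.mp ?_
            rw [QuotientGroup.out_eq']
          rw [EAux_mk_apply, MonoidAlgebra.single_mul_single, one_mul,
            prAux_single_mem _ hmem]
          set h : H := ⟨(Quotient.out q)⁻¹ * g, hmem⟩ with hh
          rw [← hsmul_zsmul]
          rw [ind_mk_rel _ h (c • a) |>.symm]
          rw [MonoidAlgebra.single_mul_single, mul_one]
          have : Quotient.out q * ((Quotient.out q)⁻¹ * g) = g := by
            rw [mul_inv_cancel_left]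
          rw [hh]
          show (QuotientAddGroup.mk ((MonoidAlgebra.single (Quotient.out q * ((Quotient.out q)⁻¹ * g)) 1 :
            MonoidAlgebra ℤ G) ⊗ₜ[ℤ] (c • a)) : Ind G H A) = _
          rw [this]
          congr 1
          rw [← TensorProduct.smul_tmul, MonoidAlgebra.smul_single, smul_eq_mul, mul_one]
        · intro c' _ hc'
          rw [EAux_mk_apply, MonoidAlgebra.single_mul_single, one_mul]
          rw [prAux_single_not_mem _ (fun hmem => hc' ?_) c]
          · rw [TensorProduct.tmul_zero]
            rfl
          · have : (QuotientGroup.mk (Quotient.out c') : G ⧸ H) = QuotientGroup.mk g :=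
              QuotientGroup.eq.mpr hmem
            rw [QuotientGroup.out_eq'] at this
            exact this

theorem EAux_equivariant (g : G) (v : Ind G H A) :
    EAux G H A (indSmul G H A g v) = coindSmul G H A g (EAux G H A v) := by
  have hadd : ∀ φ ψ : Coind G H A, coindSmul G H A g (φ + ψ)
      = coindSmul G H A g φ + coindSmul G H A g ψ := fun φ ψ =>
    Subtype.ext (AddMonoidHom.ext fun y => rfl)
  have hzero : coindSmul G H A g (0 : Coind G H A) = 0 :=
    Subtype.ext (AddMonoidHom.ext fun y => rfl)
  induction v using QuotientAddGroup.induction_on with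
  | H z =>
    induction z using TensorProduct.induction_on with
    | zero =>
      rw [QuotientAddGroup.mk_zero]; erw [map_zero (indSmul G H A g), map_zero (EAux G H A), hzero]
    | add x y hx hy =>
      rw [QuotientAddGroup.mk_add]; erw [map_add (indSmul G H A g), map_add (EAux G H A), map_add (EAux G H A), hadd, hx, hy]
    | tmul x a =>
      have hind : indSmul G H A g (QuotientAddGroup.mk (x ⊗ₜ[ℤ] a))
          = QuotientAddGroup.mk ((MonoidAlgebra.single g 1 * x) ⊗ₜ[ℤ] a) := by
        refine (QuotientAddGroup.map_mk _ _ _ _ _).trans ?_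
        congr 1
      refine Subtype.ext (AddMonoidHom.ext fun y => ?_)
      rw [hind]
      show prAux G H A a (y * (MonoidAlgebra.single g 1 * x))
        = prAux G H A a ((y * MonoidAlgebra.single g 1) * x)
      rw [mul_assoc]

end Inverse

/-- If `G'` is a subgroup of finite index in `G` and `A` is a `G'`-module, then the induced
`G`-module `ℤ[G] ⊗_{ℤ[G']} A` is isomorphic, as a `G`-module, to the coinduced `G`-module
`Hom_{ℤ[G']}(ℤ[G], A)`. -/
theorem ind_iso_coind [H.FiniteIndex] :
    ∃ e : Ind G H A ≃+ Coind G H A,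
      ∀ (g : G) (v : Ind G H A), e (indSmul G H A g v) = coindSmul G H A g (e v) := by
  haveI : Fintype (G ⧸ H) := Fintype.ofFinite _
  refine ⟨AddMonoidHom.toAddEquiv (EAux G H A) (GinvAux G H A)
    (AddMonoidHom.ext fun v => GinvAux_EAux v)
    (AddMonoidHom.ext fun φ => EAux_GinvAux φ), fun g v => EAux_equivariant g v⟩
end
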